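/- Let Y be a separable infinite-dimensional Hilbert space, G ∈ L(Y) compact selfadjoint with I+G bijective, and K ∈ L(Y) compact selfadjoint positive semidefinite with ker K = ker(K^{1/2}(I+G)K^{1/2}), dim (ker K)^⊥ = ∞, and with P_⊥(I+G)|_⊥ bijective where P_⊥ is the orthogonal projection onto (ker K)^⊥. Then the spectrum of K^{1/2}(I+G)K^{1/2} consists of 0 and an infinite sequence of real nonzero eigenvalues (τₙ) tending to 0, of which all but finitely many are positive. -/

import Mathlib

open Filter Topology

section Helpers
variable {H : Type*} [NormedAddCommGroup H] [InnerProductSpace ℂ H] [CompleteSpace H]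

omit [CompleteSpace H] in
lemma compact_seq {T : H →L[ℂ] H} (hT : IsCompactOperator ⇑T) (u : ℕ → H)
    (hu : ∀ n, ‖u n‖ ≤ 1) :
    ∃ y, ∃ φ : ℕ → ℕ, StrictMono φ ∧ Tendsto (fun n => T (u (φ n))) atTop (𝓝 y) := by
  have hT' : IsCompactOperator ⇑(T : H →ₗ[ℂ] H) := by simpa using hT
  obtain ⟨K, hK, hKsub⟩ := hT'.image_closedBall_subset_compact 1
  have hmem : ∀ n, T (u n) ∈ K := fun n =>
    hKsub ⟨u n, by simpa [Metric.mem_closedBall, dist_eq_norm] using hu n, rfl⟩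
  obtain ⟨y, -, φ, hφ, hy⟩ := hK.tendsto_subseq hmem
  exact ⟨y, φ, hφ, hy⟩

/-- Key lemma: a nonzero real non-eigenvalue of a compact selfadjoint operator
gives a bijective `μ - T`. -/
lemma key_bijective {T : H →L[ℂ] H} (hTsa : IsSelfAdjoint T) (hTc : IsCompactOperator ⇑T)
    {μ : ℝ} (hμ : μ ≠ 0) (heig : ∀ x : H, T x = (μ : ℂ) • x → x = 0) :
    Function.Bijective ⇑((μ : ℂ) • (1 : H →L[ℂ] H) - T) := by
  set A : H →L[ℂ] H := (μ : ℂ) • (1 : H →L[ℂ] H) - T with hA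
  have hAsa : IsSelfAdjoint A := by
    simp only [IsSelfAdjoint, hA, star_sub, star_smul, hTsa.star_eq, Complex.star_def,
      Complex.conj_ofReal, star_one]
  have hAker : ∀ x : H, A x = 0 → x = 0 := by
    intro x hx
    refine heig x ?_
    have : (μ : ℂ) • x - T x = 0 := by simpa [hA] using hx
    linear_combination (norm := module) -this
  rw [ContinuousLinearMap.bijective_iff_dense_range_and_antilipschitz]
  constructor
  · -- dense range
    have horth : (LinearMap.range (A : H →ₗ[ℂ] H)).topologicalClosure = ⊤ := by
      rw [Submodule.topologicalClosure_eq_top_iff, Submodule.eq_bot_iff]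
      intro y hy
      have hAy : A y = 0 := by
        have h1 : (inner ℂ (A (A y)) y : ℂ) = 0 := hy (A (A y)) ⟨A y, rfl⟩
        have h2 : (inner ℂ (A y) (A y) : ℂ) = 0 := by
          rw [← h1, ← ContinuousLinearMap.adjoint_inner_left, hAsa.adjoint_eq]
        exact inner_self_eq_zero.mp h2
      exact hAker y hAy
    exact horth
  · -- antilipschitz
    have hbdd : ∃ c : ℝ, 0 < c ∧ ∀ x, c * ‖x‖ ≤ ‖A x‖ := by
      by_contra hcon
      push_neg at hcon
      have hseq : ∀ n : ℕ, ∃ u : H, ‖u‖ = 1 ∧ ‖A u‖ < 1 / (n + 1) := by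
        intro n
        obtain ⟨x, hx⟩ := hcon (1 / (n + 1)) (by positivity)
        have hx0 : x ≠ 0 := by
          rintro rfl
          simp at hx
        have hnx : (0:ℝ) < ‖x‖ := norm_pos_iff.mpr hx0
        refine ⟨((‖x‖ : ℂ))⁻¹ • x, ?_, ?_⟩
        · rw [norm_smul]
          simp [inv_mul_cancel₀ hnx.ne']
        · rw [map_smul, norm_smul]
          have h1 : ‖x‖⁻¹ * ‖A x‖ < ‖x‖⁻¹ * (1 / (n + 1) * ‖x‖) :=
            mul_lt_mul_of_pos_left hx (inv_pos.mpr hnx)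
          calc ‖((‖x‖ : ℂ))⁻¹‖ * ‖A x‖ = ‖x‖⁻¹ * ‖A x‖ := by
                simp
            _ < ‖x‖⁻¹ * (1 / (n + 1) * ‖x‖) := h1
            _ = 1 / (n + 1) := by
                rw [mul_comm (1 / ((n:ℝ) + 1)) ‖x‖, ← mul_assoc,
                  inv_mul_cancel₀ hnx.ne', one_mul]
      choose u hu1 hu2 using hseq
      have hAu : Tendsto (fun n => A (u n)) atTop (𝓝 0) := by
        rw [tendsto_iff_norm_sub_tendsto_zero]
        refine squeeze_zero (g := fun n : ℕ => 1 / (n + 1)) (fun n => by positivity)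
          (fun n => by simpa using (hu2 n).le) tendsto_one_div_add_atTop_nhds_zero_nat
      obtain ⟨y, φ, hφ, hy⟩ := compact_seq hTc u (fun n => (hu1 n).le)
      have hAuφ : Tendsto (fun n => A (u (φ n))) atTop (𝓝 0) := hAu.comp hφ.tendsto_atTop
      have hμx : Tendsto (fun n => (μ : ℂ) • u (φ n)) atTop (𝓝 y) := by
        have : (fun n => (μ : ℂ) • u (φ n)) = fun n => A (u (φ n)) + T (u (φ n)) := by
          funext n; simp [hA]
        rw [this]
        simpa using hAuφ.add hy
      have hx : Tendsto (fun n => u (φ n)) atTop (𝓝 ((μ : ℂ)⁻¹ • y)) := by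
        have h := hμx.const_smul ((μ : ℂ)⁻¹)
        have he : (fun n => (μ : ℂ)⁻¹ • (μ : ℂ) • u (φ n)) = fun n => u (φ n) := by
          funext n
          rw [smul_smul, inv_mul_cancel₀ (Complex.ofReal_ne_zero.mpr hμ), one_smul]
        rwa [he] at h
      set z := (μ : ℂ)⁻¹ • y with hz
      have hznorm : ‖z‖ = 1 := by
        have := (continuous_norm.tendsto _).comp hx
        have h2 : Tendsto (fun n => ‖u (φ n)‖) atTop (𝓝 ‖z‖) := this
        have h3 : Tendsto (fun n => ‖u (φ n)‖) atTop (𝓝 1) := by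
          simp [hu1]
        exact tendsto_nhds_unique h2 h3
      have hAz : A z = 0 := by
        have h1 : Tendsto (fun n => A (u (φ n))) atTop (𝓝 (A z)) :=
          (A.continuous.tendsto _).comp hx
        exact tendsto_nhds_unique h1 hAuφ
      have : z = 0 := hAker z hAz
      rw [this] at hznorm
      simp at hznorm
    obtain ⟨c, hc, hcb⟩ := hbdd
    refine ⟨⟨c⁻¹, by positivity⟩, ?_⟩
    refine AntilipschitzWith.of_le_mul_dist fun x y => ?_
    have h := hcb (x - y)
    simp only [dist_eq_norm, map_sub] at *
    change ‖x - y‖ ≤ c⁻¹ * ‖A x - A y‖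
    calc ‖x - y‖ = c⁻¹ * (c * ‖x - y‖) := by
          rw [inv_mul_cancel_left₀ hc.ne']
      _ ≤ c⁻¹ * ‖A x - A y‖ := mul_le_mul_of_nonneg_left h (by positivity)

lemma findim_of_id_compact (E : Type*) [NormedAddCommGroup E] [NormedSpace ℂ E]
    (h : IsCompactOperator (fun x : E => x)) : FiniteDimensional ℂ E := by
  obtain ⟨K, hK, hmem⟩ := h
  have hmem' : K ∈ 𝓝 (0 : E) := by simpa using hmem
  obtain ⟨r, hr, hball⟩ := Metric.nhds_basis_closedBall.mem_iff.mp hmem'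
  exact FiniteDimensional.of_isCompact_closedBall ℂ hr
    (hK.of_isClosed_subset Metric.isClosed_closedBall hball)

lemma findim_of_compact_bijective {T : H →L[ℂ] H} (hTc : IsCompactOperator ⇑T)
    (hbij : Function.Bijective ⇑T) : FiniteDimensional ℂ H := by
  obtain ⟨u, hu⟩ := ContinuousLinearMap.isUnit_iff_bijective.mpr hbij
  have hcomp : IsCompactOperator (⇑(↑u⁻¹ : H →L[ℂ] H) ∘ ⇑T) :=
    hTc.continuous_comp (↑u⁻¹ : H →L[ℂ] H).continuous
  have : (⇑(↑u⁻¹ : H →L[ℂ] H) ∘ ⇑T) = fun x : H => x := by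
    funext x
    have h2 : (↑u⁻¹ : H →L[ℂ] H) ((↑u : H →L[ℂ] H) x) = ((↑u⁻¹ * ↑u : H →L[ℂ] H)) x := rfl
    simp only [Function.comp_apply, ← hu, h2, u.inv_mul, ContinuousLinearMap.one_apply]
  rw [this] at hcomp
  exact findim_of_id_compact H hcomp

lemma not_bijective_zero_sub {T : H →L[ℂ] H} (hTc : IsCompactOperator ⇑T)
    (hinf : ¬ FiniteDimensional ℂ H) :
    ¬ Function.Bijective ⇑((0 : ℂ) • (1 : H →L[ℂ] H) - T) := by
  intro hbij
  have h1 : ((0 : ℂ) • (1 : H →L[ℂ] H) - T) = -T := by simp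
  rw [h1] at hbij
  have hbijT : Function.Bijective ⇑T := by
    have : ⇑(-T) = (fun x : H => -x) ∘ ⇑T := by funext x; simp
    rw [this] at hbij
    exact (Function.Bijective.of_comp_iff' (neg_involutive.bijective) ⇑T).mp hbij
  exact hinf (findim_of_compact_bijective hTc hbijT)

lemma eq_zero_of_no_eigenvalues {T : H →L[ℂ] H} (hTsa : IsSelfAdjoint T)
    (hTc : IsCompactOperator ⇑T)
    (h : ∀ μ : ℝ, μ ≠ 0 → ∀ x : H, T x = (μ : ℂ) • x → x = 0) : T = 0 := by
  have hsub : spectrum ℂ T ⊆ {0} := by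
    intro z hz
    by_contra hz0
    have hzre : z = (z.re : ℂ) := hTsa.mem_spectrum_eq_re hz
    have hre : z.re ≠ 0 := by
      intro h0
      exact hz0 (by rw [Set.mem_singleton_iff, hzre, h0, Complex.ofReal_zero])
    have hbij := key_bijective hTsa hTc hre (h z.re hre)
    have : IsUnit ((z.re : ℂ) • (1 : H →L[ℂ] H) - T) :=
      ContinuousLinearMap.isUnit_iff_bijective.mpr hbij
    rw [spectrum.mem_iff, Algebra.algebraMap_eq_smul_one] at hz
    rw [hzre] at hz
    exact hz this
  have hrad : spectralRadius ℂ T = 0 := by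
    rw [spectralRadius]
    refine le_antisymm ?_ zero_le
    refine iSup₂_le fun k hk => ?_
    have : k = 0 := hsub hk
    simp [this]
  have := hTsa.spectralRadius_eq_nnnorm
  rw [hrad] at this
  have hnn : ‖T‖₊ = 0 := by exact_mod_cast this.symm
  ext x
  simp [nnnorm_eq_zero.mp hnn]

/-- Completeness of eigenvectors: the orthogonal complement of the span of all
eigenspaces of a compact selfadjoint operator is trivial. -/
lemma orthogonal_iSup_eigenspaces_eq_bot {T : H →L[ℂ] H} (hTsa : IsSelfAdjoint T)
    (hTc : IsCompactOperator ⇑T) :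
    (⨆ μ : ℂ, Module.End.eigenspace (T : H →ₗ[ℂ] H) μ)ᗮ = ⊥ := by
  set Tl : H →ₗ[ℂ] H := (T : H →ₗ[ℂ] H) with hTl
  set V : Submodule ℂ H := ⨆ μ : ℂ, Module.End.eigenspace Tl μ with hV
  set W : Submodule ℂ H := Vᗮ with hW
  haveI : CompleteSpace W := (Submodule.isClosed_orthogonal V).completeSpace_coe
  have hVinv : ∀ v ∈ V, T v ∈ V := by
    intro v hv
    have : V ≤ Submodule.comap Tl V := by
      refine iSup_le fun μ => ?_
      intro x hx
      rw [Submodule.mem_comap]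
      have hTx : Tl x = μ • x := Module.End.mem_eigenspace_iff.mp hx
      rw [hTx]
      exact le_iSup (fun μ : ℂ => Module.End.eigenspace Tl μ) μ
        (Submodule.smul_mem _ _ hx)
    exact this hv
  have hWinv : ∀ w : W, T (w : H) ∈ W := by
    rintro ⟨w, hw⟩
    refine (Submodule.mem_orthogonal V (T w)).mpr fun v hv => ?_
    have h1 : (inner ℂ (T v) w : ℂ) = (inner ℂ v (T w) : ℂ) := hTsa.isSymmetric v w
    rw [← h1]
    exact (Submodule.mem_orthogonal V w).mp hw (T v) (hVinv v hv)
  set T' : W →L[ℂ] W := (T ∘L W.subtypeL).codRestrict W hWinv with hT'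
  have hT'coe : ∀ x : W, (T' x : H) = T (x : H) := fun x => rfl
  have hT'sa : IsSelfAdjoint T' := by
    rw [ContinuousLinearMap.isSelfAdjoint_iff_isSymmetric]
    intro x y
    have := hTsa.isSymmetric (x : H) (y : H)
    simpa [Submodule.coe_inner, hT'coe] using this
  have hT'c : IsCompactOperator ⇑T' := by
    have h1 : IsCompactOperator (⇑T ∘ ⇑W.subtypeL) := hTc.comp_clm W.subtypeL
    exact h1.codRestrict hWinv (Submodule.isClosed_orthogonal V)
  have hT'eig : ∀ μ : ℝ, μ ≠ 0 → ∀ x : W, T' x = (μ : ℂ) • x → x = 0 := by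
    intro μ hμ x hx
    have hcoe : T (x : H) = (μ : ℂ) • (x : H) := by
      have := congrArg (Subtype.val) hx
      simpa [hT'coe] using this
    have hxV : (x : H) ∈ V := le_iSup (fun μ : ℂ => Module.End.eigenspace Tl μ) (μ : ℂ)
      (Module.End.mem_eigenspace_iff.mpr hcoe)
    have hxW : (x : H) ∈ W := x.2
    have : (x : H) = 0 := by
      have h0 := (Submodule.mem_orthogonal V (x : H)).mp hxW (x : H) hxV
      exact inner_self_eq_zero.mp h0
    exact Subtype.ext this
  have hT'0 : T' = 0 := eq_zero_of_no_eigenvalues hT'sa hT'c hT'eig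
  rw [hW, Submodule.eq_bot_iff]
  intro w hw
  have hTw : T w = 0 := by
    have h1 : T' ⟨w, hw⟩ = 0 := by rw [hT'0]; rfl
    have := congrArg Subtype.val h1
    simpa [hT'coe] using this
  have hwV : w ∈ V := by
    refine le_iSup (fun μ : ℂ => Module.End.eigenspace Tl μ) 0 ?_
    rw [Module.End.mem_eigenspace_iff, zero_smul]
    exact hTw
  have h0 := (Submodule.mem_orthogonal V w).mp hw w hwV
  exact inner_self_eq_zero.mp h0

/-- Eigenspaces for nonzero eigenvalues of a compact operator are finite-dimensional. -/
lemma eigenspace_finiteDimensional {T : H →L[ℂ] H} (hTc : IsCompactOperator ⇑T)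
    {μ : ℂ} (hμ : μ ≠ 0) :
    FiniteDimensional ℂ (Module.End.eigenspace (T : H →ₗ[ℂ] H) μ) := by
  set Tl : H →ₗ[ℂ] H := (T : H →ₗ[ℂ] H) with hTl
  set E₀ : Submodule ℂ H := Module.End.eigenspace Tl μ with hE₀
  have hclosed : IsClosed (E₀ : Set H) := by
    have : (E₀ : Set H) = {x : H | T x = μ • x} := by
      ext x
      simp [hE₀, Module.End.mem_eigenspace_iff]
      rfl
    rw [this]
    exact isClosed_eq T.continuous (continuous_const_smul μ)
  haveI : CompleteSpace E₀ := hclosed.completeSpace_coe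
  have hinv : ∀ v ∈ E₀, Tl v ∈ E₀ := by
    intro v hv
    have : Tl v = μ • v := Module.End.mem_eigenspace_iff.mp hv
    rw [this]
    exact Submodule.smul_mem _ _ hv
  have hTc' : IsCompactOperator ⇑Tl := hTc
  have hres : IsCompactOperator ⇑(Tl.restrict hinv) := hTc'.restrict' hinv
  have hid : IsCompactOperator (fun x : E₀ => x) := by
    have hsmul : IsCompactOperator (μ⁻¹ • ⇑(Tl.restrict hinv)) := hres.smul μ⁻¹
    have : (μ⁻¹ • ⇑(Tl.restrict hinv)) = fun x : E₀ => x := by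
      funext x
      have h1 : Tl.restrict hinv x = μ • x := by
        apply Subtype.ext
        have := Module.End.mem_eigenspace_iff.mp x.2
        simpa [LinearMap.restrict_apply] using this
      simp only [Pi.smul_apply, h1, smul_smul, inv_mul_cancel₀ hμ, one_smul]
    rwa [this] at hsmul
  exact findim_of_id_compact E₀ hid

/-- If a compact selfadjoint operator has only finitely many nonzero eigenvalues, then
the orthogonal complement of its kernel is finite-dimensional. -/
lemma kernel_orth_findim_of_finite_eigenvalues {T : H →L[ℂ] H} (hTsa : IsSelfAdjoint T)
    (hTc : IsCompactOperator ⇑T)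
    (hE : {μ : ℝ | μ ≠ 0 ∧ Module.End.HasEigenvalue (T : H →ₗ[ℂ] H) (μ : ℂ)}.Finite) :
    FiniteDimensional ℂ ((LinearMap.ker (T : H →ₗ[ℂ] H))ᗮ : Submodule ℂ H) := by
  set Tl : H →ₗ[ℂ] H := (T : H →ₗ[ℂ] H) with hTl
  set F : Submodule ℂ H :=
    ⨆ i : {μ : ℝ // μ ∈ hE.toFinset}, Module.End.eigenspace Tl ((i : ℝ) : ℂ) with hF
  haveI hfdi : ∀ i : {μ : ℝ // μ ∈ hE.toFinset},
      FiniteDimensional ℂ (Module.End.eigenspace Tl ((i : ℝ) : ℂ)) := by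
    intro i
    have hi := (Set.Finite.mem_toFinset hE).mp i.2
    exact eigenspace_finiteDimensional hTc (Complex.ofReal_ne_zero.mpr hi.1)
  haveI hFfd : FiniteDimensional ℂ F := by
    rw [hF]
    infer_instance
  have hVle : (⨆ μ : ℂ, Module.End.eigenspace Tl μ) ≤ LinearMap.ker Tl ⊔ F := by
    refine iSup_le fun μ => ?_
    by_cases hbot : Module.End.eigenspace Tl μ = ⊥
    · rw [hbot]; exact bot_le
    · have heig : Module.End.HasEigenvalue Tl μ := hbot
      by_cases hμ0 : μ = 0
      · subst hμ0
        rw [Module.End.eigenspace_zero]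
        exact le_trans (le_of_eq rfl) (le_sup_left.trans (le_refl _))
      · have hre : μ = (μ.re : ℂ) := by
          have h1 := hTsa.isSymmetric.conj_eigenvalue_eq_self heig
          exact (Complex.conj_eq_iff_re.mp h1).symm
        have hmem : μ.re ∈ hE.toFinset := by
          rw [Set.Finite.mem_toFinset]
          refine ⟨fun h0 => hμ0 (by rw [hre, h0, Complex.ofReal_zero]), ?_⟩
          rwa [← hre]
        have h2 : Module.End.eigenspace Tl ((μ.re : ℝ) : ℂ) ≤ F :=
          le_iSup (fun i : {μ : ℝ // μ ∈ hE.toFinset} =>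
            Module.End.eigenspace Tl ((i : ℝ) : ℂ)) ⟨μ.re, hmem⟩
        have : Module.End.eigenspace Tl μ ≤ F := by rw [hre]; exact h2
        exact this.trans le_sup_right
  have horthbot : (LinearMap.ker Tl)ᗮ ⊓ Fᗮ = ⊥ := by
    have h1 : (LinearMap.ker Tl ⊔ F)ᗮ ≤ (⨆ μ : ℂ, Module.End.eigenspace Tl μ)ᗮ :=
      Submodule.orthogonal_le hVle
    rw [orthogonal_iSup_eigenspaces_eq_bot hTsa hTc, le_bot_iff] at h1
    rw [← h1, Submodule.inf_orthogonal]
  haveI : CompleteSpace F := FiniteDimensional.complete ℂ F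
  set f : ((LinearMap.ker Tl)ᗮ : Submodule ℂ H) →ₗ[ℂ] F :=
    ((F.orthogonalProjectionOnto : H →L[ℂ] F) : H →ₗ[ℂ] F).comp
      ((LinearMap.ker Tl)ᗮ).subtype with hf
  have hinj : Function.Injective f := by
    rw [← LinearMap.ker_eq_bot, Submodule.eq_bot_iff]
    rintro ⟨x, hx⟩ hker
    have hproj : F.orthogonalProjectionOnto x = 0 := by
      simpa [hf] using hker
    have hxF : x ∈ Fᗮ := by
      have h1 := Submodule.sub_starProjection_mem_orthogonal (K := F) x
      rwa [Submodule.starProjection_apply, hproj, Submodule.coe_zero, sub_zero] at h1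
    have : x ∈ ((LinearMap.ker Tl)ᗮ ⊓ Fᗮ : Submodule ℂ H) := ⟨hx, hxF⟩
    rw [horthbot] at this
    exact Subtype.ext this
  exact FiniteDimensional.of_injective f hinj

/-- Only finitely many eigenvalues outside any disk around `0`. -/
lemma finite_eigenvalues_ge {T : H →L[ℂ] H} (hTsa : IsSelfAdjoint T)
    (hTc : IsCompactOperator ⇑T) {ε : ℝ} (hε : 0 < ε) :
    {μ : ℝ | Module.End.HasEigenvalue (T : H →ₗ[ℂ] H) (μ : ℂ) ∧ ε ≤ |μ|}.Finite := by
  by_contra hfin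
  have hinf' : {μ : ℝ | Module.End.HasEigenvalue (T : H →ₗ[ℂ] H) (μ : ℂ) ∧ ε ≤ |μ|}.Infinite :=
    hfin
  set S := {μ : ℝ | Module.End.HasEigenvalue (T : H →ₗ[ℂ] H) (μ : ℂ) ∧ ε ≤ |μ|} with hS
  let f := hinf'.natEmbedding
  set μ : ℕ → ℝ := fun n => (f n : ℝ) with hμdef
  have hμinj : Function.Injective μ := fun n m h => f.injective (Subtype.ext h)
  have hμeig : ∀ n, Module.End.HasEigenvalue (T : H →ₗ[ℂ] H) ((μ n : ℝ) : ℂ) :=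
    fun n => (f n).2.1
  have hμge : ∀ n, ε ≤ |μ n| := fun n => (f n).2.2
  have hvec : ∀ n : ℕ, ∃ e : H, ‖e‖ = 1 ∧ T e = ((μ n : ℝ) : ℂ) • e := by
    intro n
    obtain ⟨v, hv⟩ := (hμeig n).exists_hasEigenvector
    have hv0 : v ≠ 0 := hv.2
    have hnv : (0:ℝ) < ‖v‖ := norm_pos_iff.mpr hv0
    refine ⟨((‖v‖ : ℂ))⁻¹ • v, ?_, ?_⟩
    · rw [norm_smul]; simp [inv_mul_cancel₀ hnv.ne']
    · have hTv : T v = ((μ n : ℝ) : ℂ) • v := Module.End.mem_eigenspace_iff.mp hv.1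
      rw [map_smul, hTv, smul_comm]
  choose e he1 he2 using hvec
  have horthfam := hTsa.isSymmetric.orthogonalFamily_eigenspaces
  have horth : ∀ n m, n ≠ m → (inner ℂ (e n) (e m) : ℂ) = 0 := by
    intro n m hnm
    have hne : ((μ n : ℝ) : ℂ) ≠ ((μ m : ℝ) : ℂ) := by
      exact_mod_cast fun h => hnm (hμinj h)
    exact horthfam hne (v := ⟨e n, Module.End.mem_eigenspace_iff.mpr (he2 n)⟩)
      (w := ⟨e m, Module.End.mem_eigenspace_iff.mpr (he2 m)⟩)
  obtain ⟨y, φ, hφ, hy⟩ := compact_seq hTc e (fun n => (he1 n).le)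
  have hcauchy : CauchySeq (fun n => T (e (φ n))) := hy.cauchySeq
  obtain ⟨N, hN⟩ := Metric.cauchySeq_iff'.mp hcauchy ε hε
  have hd := hN (N + 1) (Nat.le_succ N)
  have hne : φ (N + 1) ≠ φ N := fun h => (Nat.succ_ne_self N) (hφ.injective h)
  set a := φ (N + 1)
  set b := φ N
  have hinner0 : (inner ℂ ((μ a : ℂ) • e a) ((μ b : ℂ) • e b) : ℂ) = 0 := by
    rw [inner_smul_left, inner_smul_right, horth a b hne, mul_zero, mul_zero]
  have hdist : dist (T (e a)) (T (e b)) ^ 2 = (μ a) ^ 2 + (μ b) ^ 2 := by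
    rw [dist_eq_norm, he2 a, he2 b, @norm_sub_sq ℂ, hinner0]
    rw [norm_smul, norm_smul, he1 a, he1 b]
    simp [Complex.norm_real, Real.norm_eq_abs, sq_abs]
  have h1 : dist (T (e a)) (T (e b)) ^ 2 < ε ^ 2 := by
    nlinarith [hd, dist_nonneg (x := T (e a)) (y := T (e b))]
  have hsq : ∀ n, ε ^ 2 ≤ (μ n) ^ 2 := by
    intro n
    nlinarith [hμge n, hε, sq_abs (μ n), abs_nonneg (μ n)]
  have h2 : ε ^ 2 + ε ^ 2 ≤ (μ a) ^ 2 + (μ b) ^ 2 := add_le_add (hsq a) (hsq b)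
  rw [hdist] at h1
  nlinarith [hε, h1, h2]

/-- Only finitely many negative eigenvalues for `R (1+G) R` with `G` compact selfadjoint,
`R` selfadjoint. -/
lemma finite_negative_eigenvalues {G R : H →L[ℂ] H}
    (hGc : IsCompactOperator ⇑G) (hGsa : IsSelfAdjoint G) (hRsa : IsSelfAdjoint R) :
    {μ : ℝ | μ < 0 ∧
      Module.End.HasEigenvalue ((R ∘L (1 + G) ∘L R : H →L[ℂ] H) : H →ₗ[ℂ] H) (μ : ℂ)}.Finite := by
  set T : H →L[ℂ] H := R ∘L (1 + G) ∘L R with hT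
  by_contra hfin
  have hinf' : {μ : ℝ | μ < 0 ∧
      Module.End.HasEigenvalue (T : H →ₗ[ℂ] H) (μ : ℂ)}.Infinite := hfin
  let f := hinf'.natEmbedding
  set μ : ℕ → ℝ := fun n => (f n : ℝ) with hμdef
  have hμinj : Function.Injective μ := fun n m h => f.injective (Subtype.ext h)
  have hμneg : ∀ n, μ n < 0 := fun n => (f n).2.1
  have hμeig : ∀ n, Module.End.HasEigenvalue (T : H →ₗ[ℂ] H) ((μ n : ℝ) : ℂ) :=
    fun n => (f n).2.2
  have hTsa : IsSelfAdjoint T := by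
    have h1 : IsSelfAdjoint (1 + G : H →L[ℂ] H) := by
      have : IsSelfAdjoint (1 : H →L[ℂ] H) := by
        rw [IsSelfAdjoint]
        exact star_one _
      exact this.add hGsa
    have h2 := h1.adjoint_conj R
    rwa [hRsa.adjoint_eq] at h2
  have hvec : ∀ n : ℕ, ∃ e : H, ‖e‖ = 1 ∧ T e = ((μ n : ℝ) : ℂ) • e := by
    intro n
    obtain ⟨v, hv⟩ := (hμeig n).exists_hasEigenvector
    have hnv : (0:ℝ) < ‖v‖ := norm_pos_iff.mpr hv.2
    refine ⟨((‖v‖ : ℂ))⁻¹ • v, ?_, ?_⟩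
    · rw [norm_smul]; simp [inv_mul_cancel₀ hnv.ne']
    · have hTv : T v = ((μ n : ℝ) : ℂ) • v := Module.End.mem_eigenspace_iff.mp hv.1
      rw [map_smul, hTv, smul_comm]
  choose e he1 he2 using hvec
  have horthfam := hTsa.isSymmetric.orthogonalFamily_eigenspaces
  have horth : ∀ n m, n ≠ m → (inner ℂ (e n) (e m) : ℂ) = 0 := by
    intro n m hnm
    have hne : ((μ n : ℝ) : ℂ) ≠ ((μ m : ℝ) : ℂ) := by
      exact_mod_cast fun h => hnm (hμinj h)
    exact horthfam hne (v := ⟨e n, Module.End.mem_eigenspace_iff.mpr (he2 n)⟩)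
      (w := ⟨e m, Module.End.mem_eigenspace_iff.mpr (he2 m)⟩)
  have heON : Orthonormal ℂ e := ⟨he1, fun {n m} hnm => horth n m hnm⟩
  set w : ℕ → H := fun n => R (e n) with hw
  have hBw : ∀ n, (R ∘L (1 + G)) (w n) = ((μ n : ℝ) : ℂ) • e n := fun n => he2 n
  have hwind : LinearIndependent ℂ w := by
    apply LinearIndependent.of_comp ((R ∘L (1 + G) : H →L[ℂ] H) : H →ₗ[ℂ] H)
    have hu : ∀ n, (((R ∘L (1 + G) : H →L[ℂ] H) : H →ₗ[ℂ] H) ∘ w) n =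
        (Units.mk0 ((μ n : ℝ) : ℂ) (by exact_mod_cast (hμneg n).ne)) • e n := by
      intro n
      simp only [Function.comp_apply, ContinuousLinearMap.coe_coe]
      rw [hBw n]
      rfl
    rw [funext hu]
    exact heON.linearIndependent.units_smul _
  have hneg : ∀ x ∈ Submodule.span ℂ (Set.range w), x ≠ 0 →
      ((inner ℂ ((1 + G : H →L[ℂ] H) x) x : ℂ)).re < 0 := by
    intro x hx hx0
    rw [Finsupp.mem_span_range_iff_exists_finsupp] at hx
    obtain ⟨c, hc⟩ := hx
    have hxsum : x = ∑ i ∈ c.support, c i • w i := by rw [← hc]; rfl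
    set s := c.support with hs
    set y : H := ∑ i ∈ s, c i • e i with hy
    have hxy : x = R y := by
      rw [hxsum, hy, map_sum]
      exact Finset.sum_congr rfl fun i _ => by rw [map_smul]
    have hTy : T y = ∑ i ∈ s, (c i * ((μ i : ℝ) : ℂ)) • e i := by
      rw [hy, map_sum]
      refine Finset.sum_congr rfl fun i _ => ?_
      rw [map_smul, he2 i, smul_smul]
    have hinner : (inner ℂ ((1 + G : H →L[ℂ] H) x) x : ℂ) = inner ℂ (T y) y := by
      rw [hxy]
      have h1 : T y = R ((1 + G : H →L[ℂ] H) (R y)) := rfl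
      rw [h1]
      exact (hRsa.isSymmetric ((1 + G : H →L[ℂ] H) (R y)) y).symm
    have hsum : (inner ℂ (T y) y : ℂ) =
        ∑ i ∈ s, (starRingEnd ℂ) (c i * ((μ i : ℝ) : ℂ)) * c i := by
      rw [hTy, hy]
      exact heON.inner_sum (fun i => c i * ((μ i : ℝ) : ℂ)) c s
    have hterm : ∀ i, ((starRingEnd ℂ) (c i * ((μ i : ℝ) : ℂ)) * c i).re =
        μ i * Complex.normSq (c i) := by
      intro i
      have : (starRingEnd ℂ) (c i * ((μ i : ℝ) : ℂ)) * c i =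
          ((μ i : ℝ) : ℂ) * ((starRingEnd ℂ) (c i) * c i) := by
        rw [map_mul, Complex.conj_ofReal]
        ring
      have h9 : (starRingEnd ℂ) (c i) * c i = (Complex.normSq (c i) : ℂ) := by
        rw [mul_comm, Complex.mul_conj]
      rw [this, h9, ← Complex.ofReal_mul, Complex.ofReal_re]
    have hre : ((inner ℂ ((1 + G : H →L[ℂ] H) x) x : ℂ)).re =
        ∑ i ∈ s, μ i * Complex.normSq (c i) := by
      rw [hinner, hsum, Complex.re_sum]
      exact Finset.sum_congr rfl fun i _ => hterm i
    rw [hre]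
    have hsne : s.Nonempty := by
      rcases Finset.eq_empty_or_nonempty s with h | h
      · exfalso; apply hx0; rw [hxsum, h, Finset.sum_empty]
      · exact h
    refine Finset.sum_neg (fun i hi => ?_) hsne
    have hci : c i ≠ 0 := Finsupp.mem_support_iff.mp hi
    have : 0 < Complex.normSq (c i) := Complex.normSq_pos.mpr hci
    exact mul_neg_of_neg_of_pos (hμneg i) this
  set z : ℕ → H := InnerProductSpace.gramSchmidtNormed ℂ w with hz
  have hzON : Orthonormal ℂ z := InnerProductSpace.gramSchmidtNormed_orthonormal hwind
  have hzmem : ∀ k, z k ∈ Submodule.span ℂ (Set.range w) := by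
    intro k
    have h1 : InnerProductSpace.gramSchmidt ℂ w k ∈ Submodule.span ℂ (w '' Set.Iic k) :=
      InnerProductSpace.gramSchmidt_mem_span ℂ w le_rfl
    have h2 : InnerProductSpace.gramSchmidt ℂ w k ∈ Submodule.span ℂ (Set.range w) :=
      Submodule.span_mono (Set.image_subset_range w _) h1
    rw [hz]
    unfold InnerProductSpace.gramSchmidtNormed
    exact Submodule.smul_mem _ _ h2
  have hz1 : ∀ k, ‖z k‖ = 1 := hzON.1
  have hzneg : ∀ k, ((inner ℂ (G (z k)) (z k) : ℂ)).re ≤ -1 := by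
    intro k
    have hzk0 : z k ≠ 0 := by
      intro h
      have := hz1 k
      rw [h, norm_zero] at this
      norm_num at this
    have h1 := hneg (z k) (hzmem k) hzk0
    have h2 : (1 + G : H →L[ℂ] H) (z k) = z k + G (z k) := by
      simp [ContinuousLinearMap.add_apply]
    rw [h2, inner_add_left] at h1
    have h3 : ((inner ℂ (z k) (z k) : ℂ)).re = 1 := by
      rw [inner_self_eq_norm_sq_to_K (𝕜 := ℂ)]
      simp [hz1 k]
    rw [Complex.add_re, h3] at h1
    linarith
  have hGz0 : Tendsto (fun k => G (z k)) atTop (𝓝 0) := by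
    apply tendsto_of_subseq_tendsto
    intro ns hns
    obtain ⟨y, φ, hφ, hy⟩ := compact_seq hGc (fun k => z (ns k)) (fun k => (hz1 _).le)
    have hy0 : y = 0 := by
      have hall : ∀ v : H, (inner ℂ y v : ℂ) = 0 := by
        intro v
        have h1 : Tendsto (fun n => (inner ℂ (G (z (ns (φ n)))) v : ℂ)) atTop
            (𝓝 (inner ℂ y v : ℂ)) := hy.inner tendsto_const_nhds
        have h2 : ∀ k, (inner ℂ (G (z k)) v : ℂ) = inner ℂ (z k) (G v) := fun k =>
          hGsa.isSymmetric (z k) v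
        have hsummable := hzON.inner_products_summable (x := G v)
        have h3 : Tendsto (fun k => ‖(inner ℂ (z k) (G v) : ℂ)‖ ^ 2) atTop (𝓝 0) :=
          hsummable.tendsto_atTop_zero
        have h4 : Tendsto (fun k => ‖(inner ℂ (z k) (G v) : ℂ)‖) atTop (𝓝 0) := by
          have := h3.sqrt
          simpa [Real.sqrt_sq (norm_nonneg _)] using this
        have h5 : Tendsto (fun k => (inner ℂ (z k) (G v) : ℂ)) atTop (𝓝 0) :=
          tendsto_zero_iff_norm_tendsto_zero.mpr h4
        have h6 : Tendsto (fun n => (inner ℂ (z (ns (φ n))) (G v) : ℂ)) atTop (𝓝 0) :=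
          h5.comp (hns.comp hφ.tendsto_atTop)
        have h7 : Tendsto (fun n => (inner ℂ (G (z (ns (φ n)))) v : ℂ)) atTop (𝓝 0) := by
          simpa [h2] using h6
        exact tendsto_nhds_unique h1 h7
      exact inner_self_eq_zero.mp (hall y)
    exact ⟨φ, by rw [hy0] at hy; exact hy⟩
  have hnorm0 : Tendsto (fun k => ‖G (z k)‖) atTop (𝓝 0) := by
    simpa using hGz0.norm
  have hlb : ∀ k, (1 : ℝ) ≤ ‖G (z k)‖ := by
    intro k
    have h1 := hzneg k
    have h2 : (1 : ℝ) ≤ |((inner ℂ (G (z k)) (z k) : ℂ)).re| := by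
      rw [abs_of_nonpos (by linarith : ((inner ℂ (G (z k)) (z k) : ℂ)).re ≤ 0)]
      linarith
    calc (1 : ℝ) ≤ |((inner ℂ (G (z k)) (z k) : ℂ)).re| := h2
      _ ≤ ‖(inner ℂ (G (z k)) (z k) : ℂ)‖ := Complex.abs_re_le_norm _
      _ ≤ ‖G (z k)‖ * ‖z k‖ := norm_inner_le_norm _ _
      _ = ‖G (z k)‖ := by rw [hz1 k, mul_one]
  have : ∀ᶠ k in atTop, ‖G (z k)‖ < 1 := by
    have := hnorm0.eventually (eventually_lt_nhds (by norm_num : (0:ℝ) < 1))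
    exact this
  obtain ⟨k, hk⟩ := this.exists
  exact absurd (hlb k) (not_le.mpr hk)

end Helpers

section Enum

lemma eventually_not_mem_of_finite {S : Set ℕ} (hS : S.Finite) :
    ∀ᶠ n in Filter.atTop, n ∉ S := by
  obtain ⟨N, hN⟩ := hS.bddAbove
  filter_upwards [Filter.eventually_gt_atTop N] with n hn hmem
  exact absurd (hN hmem) (not_le.mpr hn)

lemma exists_enumeration {E : Set ℝ} (hE : E.Infinite) (h0 : (0:ℝ) ∉ E)
    (hfin : ∀ ε : ℝ, 0 < ε → {x ∈ E | ε ≤ |x|}.Finite)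
    (hneg : {x ∈ E | x < 0}.Finite) :
    ∃ τ : ℕ → ℝ, Function.Injective τ ∧ Set.range τ = E ∧
      Filter.Tendsto τ Filter.atTop (nhds 0) ∧ (∀ᶠ n in Filter.atTop, 0 < τ n) := by
  have hcount : E.Countable := by
    have hsub : E ⊆ ⋃ n : ℕ, {x ∈ E | 1/(n+1) ≤ |x|} := by
      intro x hx
      have hx0 : x ≠ 0 := fun h => h0 (h ▸ hx)
      obtain ⟨n, hn⟩ := exists_nat_one_div_lt (abs_pos.mpr hx0)
      exact Set.mem_iUnion.mpr ⟨n, hx, hn.le⟩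
    exact Set.Countable.mono hsub
      (Set.countable_iUnion (fun n => (hfin _ (by positivity)).countable))
  haveI := hcount.to_subtype
  haveI := hE.to_subtype
  obtain ⟨den⟩ := nonempty_denumerable (↥E)
  set q : ℕ ≃ ↥E := (Denumerable.eqv ↥E).symm with hq
  set τ : ℕ → ℝ := fun n => (q n : ℝ) with hτ
  have hinj : Function.Injective τ := fun n m h =>
    q.injective (Subtype.ext h)
  have hrange : Set.range τ = E := by
    rw [hτ]
    have : Set.range (fun n => (q n : ℝ)) = Subtype.val '' Set.range q := by
      rw [← Set.range_comp]; rfl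
    rw [this, q.range_eq_univ, Set.image_univ, Subtype.range_coe]
  have hmem : ∀ n, τ n ∈ E := fun n => (q n).2
  refine ⟨τ, hinj, hrange, ?_, ?_⟩
  · rw [Metric.tendsto_atTop]
    intro ε hε
    have hbad : {n : ℕ | ε ≤ |τ n|}.Finite := by
      have hsub : {n : ℕ | ε ≤ |τ n|} ⊆ τ ⁻¹' {x ∈ E | ε ≤ |x|} := by
        intro n hn
        exact ⟨hmem n, hn⟩
      exact ((hfin ε hε).preimage hinj.injOn).subset hsub
    obtain ⟨N, hN⟩ := hbad.bddAbove
    refine ⟨N + 1, fun n hn => ?_⟩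
    rw [Real.dist_eq, sub_zero]
    by_contra hge
    push_neg at hge
    have : n ∈ {n : ℕ | ε ≤ |τ n|} := hge
    have := hN this
    omega
  · have hbad : {n : ℕ | τ n ≤ 0}.Finite := by
      have hsub : {n : ℕ | τ n ≤ 0} ⊆ τ ⁻¹' {x ∈ E | x < 0} := by
        intro n hn
        have h1 : τ n ≠ 0 := fun h => h0 (h ▸ hmem n)
        exact ⟨hmem n, lt_of_le_of_ne hn h1⟩
      exact (hneg.preimage hinj.injOn).subset hsub
    filter_upwards [eventually_not_mem_of_finite hbad] with n hn
    exact not_le.mp hn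

end Enum

/-- Abstract spectral lemma. With `Y` separable infinite-dimensional, `G`
compact selfadjoint, `I+G` bijective, `K` compact selfadjoint positive semidefinite with
square root `R = K^{1/2}`, `ker K = ker(K^{1/2}(I+G)K^{1/2})`, `(ker K)ᗮ` infinite-dimensional,
and the compression of `I+G` to `(ker K)ᗮ` bijective, the spectrum of `K^{1/2}(I+G)K^{1/2}`
consists of `0` and a sequence of real nonzero eigenvalues tending to `0`, all but finitely
many of which are positive. -/
theorem stmt_11 {Y : Type*} [NormedAddCommGroup Y] [InnerProductSpace ℂ Y] [CompleteSpace Y]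
    [TopologicalSpace.SeparableSpace Y] (hinf : ¬ FiniteDimensional ℂ Y)
    (G K R : Y →L[ℂ] Y)
    (hGc : IsCompactOperator ⇑G) (hGsa : IsSelfAdjoint G)
    (hGbij : Function.Bijective ⇑(1 + G))
    (hKc : IsCompactOperator ⇑K) (hKsa : IsSelfAdjoint K)
    (hKpos : ∀ y : Y, 0 ≤ (inner ℂ (K y) y : ℂ).re)
    (hRsa : IsSelfAdjoint R) (hRpos : ∀ y : Y, 0 ≤ (inner ℂ (R y) y : ℂ).re)
    (hRR : R ∘L R = K)
    (hker : LinearMap.ker (K : Y →ₗ[ℂ] Y) = LinearMap.ker ((R ∘L (1 + G) ∘L R : Y →L[ℂ] Y) : Y →ₗ[ℂ] Y))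
    (hkerinf : ¬ FiniteDimensional ℂ ((LinearMap.ker (K : Y →ₗ[ℂ] Y))ᗮ : Submodule ℂ Y))
    (P : Y →L[ℂ] Y) (hPsa : IsSelfAdjoint P)
    (hPmem : ∀ y : Y, P y ∈ (LinearMap.ker (K : Y →ₗ[ℂ] Y))ᗮ)
    (hPfix : ∀ y ∈ (LinearMap.ker (K : Y →ₗ[ℂ] Y))ᗮ, P y = y)
    (hcompr : Function.Bijective (fun x : ((LinearMap.ker (K : Y →ₗ[ℂ] Y))ᗮ : Submodule ℂ Y) =>
      (⟨P ((1 + G : Y →L[ℂ] Y) (x : Y)), hPmem _⟩ : ((LinearMap.ker (K : Y →ₗ[ℂ] Y))ᗮ : Submodule ℂ Y)))) :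
    ∃ τ : ℕ → ℝ, (∀ n, τ n ≠ 0) ∧
      Filter.Tendsto τ Filter.atTop (nhds 0) ∧
      (∀ᶠ n in Filter.atTop, 0 < τ n) ∧
      {lam : ℂ | ¬ Function.Bijective
          ⇑(lam • (1 : Y →L[ℂ] Y) - R ∘L (1 + G) ∘L R : Y →L[ℂ] Y)} =
        {0} ∪ Set.range (fun n => (τ n : ℂ)) := by
  set T : Y →L[ℂ] Y := R ∘L (1 + G) ∘L R with hTdef
  have h1G : IsSelfAdjoint (1 + G : Y →L[ℂ] Y) := by
    have h1 : IsSelfAdjoint (1 : Y →L[ℂ] Y) := by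
      rw [IsSelfAdjoint]
      exact star_one _
    exact h1.add hGsa
  have hTsa : IsSelfAdjoint T := by
    have h2 := h1G.adjoint_conj R
    rwa [hRsa.adjoint_eq] at h2
  have hTc : IsCompactOperator ⇑T := by
    have h1 : IsCompactOperator (⇑G ∘ ⇑R) := hGc.comp_clm R
    have h2 : IsCompactOperator (⇑R ∘ (⇑G ∘ ⇑R)) := h1.clm_comp R
    have h3 : IsCompactOperator (⇑K + (⇑R ∘ (⇑G ∘ ⇑R))) := hKc.add h2
    have heq : ⇑T = ⇑K + (⇑R ∘ (⇑G ∘ ⇑R)) := by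
      funext x
      have : T x = R (R x + G (R x)) := rfl
      rw [this, map_add, ← hRR]
      rfl
    rwa [heq]
  set E : Set ℝ := {μ : ℝ | μ ≠ 0 ∧ Module.End.HasEigenvalue (T : Y →ₗ[ℂ] Y) (μ : ℂ)}
    with hE
  have hEinf : E.Infinite := by
    intro hEfin
    have hfd := kernel_orth_findim_of_finite_eigenvalues hTsa hTc hEfin
    rw [← hker] at hfd
    exact hkerinf hfd
  have h0 : (0:ℝ) ∉ E := fun h => h.1 rfl
  have hfinε : ∀ ε : ℝ, 0 < ε → {x ∈ E | ε ≤ |x|}.Finite := by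
    intro ε hε
    refine (finite_eigenvalues_ge hTsa hTc hε).subset ?_
    rintro x ⟨⟨hx0, heig⟩, hge⟩
    exact ⟨heig, hge⟩
  have hnegfin : {x ∈ E | x < 0}.Finite := by
    refine (finite_negative_eigenvalues hGc hGsa hRsa).subset ?_
    rintro x ⟨⟨hx0, heig⟩, hlt⟩
    exact ⟨hlt, heig⟩
  obtain ⟨τ, hinj, hrange, htend, hpos⟩ := exists_enumeration hEinf h0 hfinε hnegfin
  have hτmem : ∀ n, τ n ∈ E := fun n => hrange ▸ Set.mem_range_self n
  refine ⟨τ, fun n => (hτmem n).1, htend, hpos, ?_⟩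
  ext lam
  simp only [Set.mem_setOf_eq, Set.mem_union, Set.mem_singleton_iff, Set.mem_range]
  constructor
  · intro hnb
    by_cases hl0 : lam = 0
    · left; exact hl0
    · right
      have hspec : lam ∈ spectrum ℂ T := by
        rw [spectrum.mem_iff, Algebra.algebraMap_eq_smul_one]
        intro hunit
        exact hnb (ContinuousLinearMap.isUnit_iff_bijective.mp hunit)
      have hre : lam = (lam.re : ℂ) := hTsa.mem_spectrum_eq_re hspec
      have hre0 : lam.re ≠ 0 := fun h => hl0 (by rw [hre, h, Complex.ofReal_zero])
      have heig : Module.End.HasEigenvalue (T : Y →ₗ[ℂ] Y) ((lam.re : ℝ) : ℂ) := by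
        by_contra hne
        have hnoeig : ∀ x : Y, T x = ((lam.re : ℝ) : ℂ) • x → x = 0 := by
          intro x hx
          by_contra hx0
          exact hne (Module.End.hasEigenvalue_of_hasEigenvector
            ⟨Module.End.mem_eigenspace_iff.mpr hx, hx0⟩)
        have hbij := key_bijective hTsa hTc hre0 hnoeig
        rw [hre] at hnb
        exact hnb hbij
      have hmemE : lam.re ∈ E := ⟨hre0, heig⟩
      rw [← hrange] at hmemE
      obtain ⟨n, hn⟩ := hmemE
      exact ⟨n, by rw [hre, hn]⟩
  · rintro (rfl | ⟨n, rfl⟩)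
    · exact not_bijective_zero_sub hTc hinf
    · obtain ⟨v, hv⟩ := (hτmem n).2.exists_hasEigenvector
      intro hbij
      have h1 : (((τ n : ℝ) : ℂ) • (1 : Y →L[ℂ] Y) - T) v = 0 := by
        have hTv : T v = ((τ n : ℝ) : ℂ) • v := Module.End.mem_eigenspace_iff.mp hv.1
        simp [ContinuousLinearMap.sub_apply, hTv]
      exact hv.2 (hbij.injective (by rw [h1, map_zero]))
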